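/- For every λ > 1 there exists a σ-finite Borel measure μ_λ on X_B such that for every finite path (v_0,…,v_n) in B one has μ_λ([v_0,…,v_n]) = (λ−1)^{v_n−1}/λ^n; in particular μ_λ is tail invariant, since the measure of a cylinder set depends only on its length n and its terminal vertex v_n. -/

import Mathlib

open MeasureTheory

/-- An infinite path in the one-sided stationary generalized Pascal-Bratteli diagram `B`:
a sequence of vertices `v n ≥ 1` with `v (n+1) ∈ {v n, v n + 1}`. -/
def IsPathB (v : ℕ → ℕ) : Prop :=
  (∀ n, 1 ≤ v n) ∧ ∀ n, v (n + 1) = v n ∨ v (n + 1) = v n + 1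

/-- The path space `X_B`. -/
abbrev PathB : Type := {v : ℕ → ℕ // IsPathB v}

/-- `f` encodes a finite path `(f 0, …, f n)` in `B`. -/
def FinPathB (f : ℕ → ℕ) (n : ℕ) : Prop :=
  (∀ k ≤ n, 1 ≤ f k) ∧ ∀ k < n, f (k + 1) = f k ∨ f (k + 1) = f k + 1

/-- The cylinder set `[f 0, …, f n] ⊆ X_B`. -/
def CylB (f : ℕ → ℕ) (n : ℕ) : Set PathB := {w : PathB | ∀ k ≤ n, w.1 k = f k}

open Set

noncomputable def Sl (l : ℝ) : ℝ → ℝ :=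
  fun x => if x < (l-1)/l then (l/(l-1)) * x else l * (x - (l-1)/l)

noncomputable def Dl (l : ℝ) : ℝ → ℕ := fun x => if x < (l-1)/l then 1 else 0

lemma Dl_le_one (l : ℝ) (x : ℝ) : Dl l x ≤ 1 := by unfold Dl; split <;> omega

lemma measurable_Sl (l : ℝ) : Measurable (Sl l) :=
  Measurable.ite (measurableSet_lt measurable_id measurable_const)
    (measurable_id.const_mul _) ((measurable_id.sub_const _).const_mul _)

lemma measurable_Dl (l : ℝ) : Measurable (Dl l) :=
  Measurable.ite (measurableSet_lt measurable_id measurable_const)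
    measurable_const measurable_const

lemma vol_digits (l : ℝ) (hl : 1 < l) :
    ∀ (n : ℕ) (ε : ℕ → ℕ), (∀ k, k < n → ε k ≤ 1) →
    volume {x : ℝ | x ∈ Ico (0:ℝ) 1 ∧ ∀ k < n, Dl l ((Sl l)^[k] x) = ε k}
      = ENNReal.ofReal ((l-1) ^ (∑ k ∈ Finset.range n, ε k) / l ^ n) := by
  have hl0 : (0:ℝ) < l := by linarith
  have hl1 : (0:ℝ) < l - 1 := by linarith
  have hq0 : (0:ℝ) < (l-1)/l := by positivity
  have hq1 : (l-1)/l < 1 := by rw [div_lt_one hl0]; linarith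
  have hqe : l * ((l-1)/l) = l - 1 := by field_simp
  have hqe2 : (l/(l-1)) * ((l-1)/l) = 1 := by field_simp
  have hc : (0:ℝ) < l/(l-1) := by positivity
  intro n
  induction n with
  | zero =>
    intro ε hε
    simp only [Nat.not_lt_zero, false_implies, implies_true, and_true,
      Finset.range_zero, Finset.sum_empty, pow_zero]
    have : {x : ℝ | x ∈ Ico (0:ℝ) 1} = Ico (0:ℝ) 1 := rfl
    rw [this, Real.volume_Ico]
    norm_num
  | succ n ih =>
    intro ε hε
    have hεn : ∀ k < n, (fun k => ε (k+1)) k ≤ 1 := fun k hk => hε (k+1) (by omega)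
    have key := ih (fun k => ε (k+1)) hεn
    set A : Set ℝ := {x : ℝ | x ∈ Ico (0:ℝ) 1 ∧ ∀ k < n, Dl l ((Sl l)^[k] x) = ε (k+1)} with hA
    rcases (by have := hε 0 (by omega); omega : ε 0 = 0 ∨ ε 0 = 1) with h0 | h0
    · -- digit 0 : x ∈ [q,1), S x = l*(x-q)
      have hset : {x : ℝ | x ∈ Ico (0:ℝ) 1 ∧ ∀ k < n + 1, Dl l ((Sl l)^[k] x) = ε k}
          = (fun x : ℝ => l * (x - (l-1)/l)) ⁻¹' A := by
        ext x
        simp only [mem_setOf_eq, mem_preimage, hA, mem_Ico]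
        constructor
        · rintro ⟨⟨hx0, hx1⟩, hd⟩
          have hd0 := hd 0 (by omega)
          simp only [Function.iterate_zero, id_eq, Dl, h0] at hd0
          have hxq : ¬ x < (l-1)/l := by intro h; simp [h] at hd0
          push_neg at hxq
          have hS : Sl l x = l * (x - (l-1)/l) := by simp [Sl, not_lt.2 hxq]
          refine ⟨⟨by nlinarith [hqe], by nlinarith [hqe]⟩, ?_⟩
          intro k hk
          have := hd (k+1) (by omega)
          rwa [Function.iterate_succ_apply, hS] at this
        · rintro ⟨⟨hy0, hy1⟩, hd⟩
          have hxq : (l-1)/l ≤ x := by nlinarith [hqe]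
          have hx1 : x < 1 := by nlinarith [hqe]
          have hS : Sl l x = l * (x - (l-1)/l) := by simp [Sl, not_lt.2 hxq]
          refine ⟨⟨by linarith, hx1⟩, ?_⟩
          intro k hk
          match k with
          | 0 => simp [Dl, not_lt.2 hxq, h0]
          | (j+1) =>
            rw [Function.iterate_succ_apply, hS]
            exact hd j (by omega)
      rw [hset]
      have hcomp : (fun x : ℝ => l * (x - (l-1)/l)) ⁻¹' A
          = (fun x : ℝ => x + -((l-1)/l)) ⁻¹' ((fun x : ℝ => l * x) ⁻¹' A) := by
        ext x; simp [sub_eq_add_neg]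
      rw [hcomp, measure_preimage_add_right, Real.volume_preimage_mul_left (by positivity : l ≠ 0), key]
      rw [← ENNReal.ofReal_mul (by positivity)]
      congr 1
      rw [abs_of_pos (by positivity : (0:ℝ) < l⁻¹), Finset.sum_range_succ' _ n, h0, add_zero, pow_succ]
      field_simp
    · -- digit 1 : x ∈ [0,q), S x = (l/(l-1)) * x
      have hset : {x : ℝ | x ∈ Ico (0:ℝ) 1 ∧ ∀ k < n + 1, Dl l ((Sl l)^[k] x) = ε k}
          = (fun x : ℝ => (l/(l-1)) * x) ⁻¹' A := by
        ext x
        simp only [mem_setOf_eq, mem_preimage, hA, mem_Ico]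
        constructor
        · rintro ⟨⟨hx0, hx1⟩, hd⟩
          have hd0 := hd 0 (by omega)
          simp only [Function.iterate_zero, id_eq, Dl, h0] at hd0
          have hxq : x < (l-1)/l := by by_contra h; simp [h] at hd0
          have hS : Sl l x = (l/(l-1)) * x := by simp [Sl, hxq]
          refine ⟨⟨by positivity, by nlinarith [hqe2, hc]⟩, ?_⟩
          intro k hk
          have := hd (k+1) (by omega)
          rwa [Function.iterate_succ_apply, hS] at this
        · rintro ⟨⟨hy0, hy1⟩, hd⟩
          have hxq : x < (l-1)/l := by
            by_contra h
            push_neg at h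
            have h2 : (l/(l-1)) * ((l-1)/l) ≤ (l/(l-1)) * x := by nlinarith
            nlinarith [hqe2]
          have hx0 : 0 ≤ x := by nlinarith [hc]
          have hS : Sl l x = (l/(l-1)) * x := by simp [Sl, hxq]
          refine ⟨⟨hx0, by linarith⟩, ?_⟩
          intro k hk
          match k with
          | 0 => simp [Dl, hxq, h0]
          | (j+1) =>
            rw [Function.iterate_succ_apply, hS]
            exact hd j (by omega)
      rw [hset, Real.volume_preimage_mul_left (by positivity : l/(l-1) ≠ 0), key]
      rw [← ENNReal.ofReal_mul (by positivity)]
      congr 1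
      rw [abs_of_pos (by positivity : (0:ℝ) < (l/(l-1))⁻¹), Finset.sum_range_succ' _ n, h0, pow_succ, pow_succ]
      field_simp

noncomputable def Psi (l : ℝ) (m : ℕ) : ℝ → PathB := fun x =>
  ⟨fun n => m + 1 + ∑ k ∈ Finset.range n, Dl l ((Sl l)^[k] x), by
    constructor
    · intro n; dsimp only; omega
    · intro n
      dsimp only
      rw [Finset.sum_range_succ]
      have := Dl_le_one l ((Sl l)^[n] x)
      omega⟩

lemma measurable_Psi (l : ℝ) (m : ℕ) : Measurable (Psi l m) := by
  apply Measurable.subtype_mk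
  apply measurable_pi_lambda
  intro n
  apply Measurable.add measurable_const
  apply Finset.measurable_sum
  intro k _
  exact (measurable_Dl l).comp ((measurable_Sl l).iterate k)

lemma measurableSet_CylB (f : ℕ → ℕ) (n : ℕ) : MeasurableSet (CylB f n) := by
  have : CylB f n = ⋂ k ∈ {k : ℕ | k ≤ n}, {w : PathB | w.1 k = f k} := by
    ext w; simp [CylB]
  rw [this]
  apply MeasurableSet.biInter (Set.to_countable _)
  intro k _
  have h2 : {w : PathB | w.1 k = f k} = (fun w : PathB => w.1 k) ⁻¹' {f k} := rfl
  rw [h2]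
  exact ((measurable_pi_apply k).comp measurable_subtype_coe) (measurableSet_singleton _)

-- preimage lemmas
lemma Psi_preimage_ne (l : ℝ) (m n : ℕ) (f : ℕ → ℕ) (hm : m + 1 ≠ f 0) :
    Psi l m ⁻¹' CylB f n = ∅ := by
  ext x
  simp only [mem_preimage, mem_empty_iff_false, iff_false, CylB, mem_setOf_eq]
  intro h
  have := h 0 (Nat.zero_le n)
  simp [Psi] at this
  exact hm this

lemma Psi_preimage_eq (l : ℝ) (n : ℕ) (f : ℕ → ℕ) (hf : FinPathB f n) :
    Psi l (f 0 - 1) ⁻¹' CylB f n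
      = {x : ℝ | ∀ k < n, Dl l ((Sl l)^[k] x) = f (k+1) - f k} := by
  have h1 : f 0 - 1 + 1 = f 0 := by have := hf.1 0 (Nat.zero_le n); omega
  ext x
  simp only [mem_preimage, CylB, mem_setOf_eq, Psi]
  constructor
  · intro h k hk
    have ha := h k (by omega)
    have hb := h (k+1) (by omega)
    rw [Finset.sum_range_succ] at hb
    omega
  · intro h k hk
    induction k with
    | zero => simpa using h1
    | succ j ihj =>
      rw [Finset.sum_range_succ]
      have hj := ihj (by omega)
      have hd := h j (by omega)
      rcases hf.2 j (by omega) with h' | h' <;> omega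

lemma tele_sum (f : ℕ → ℕ) (n : ℕ) (h : ∀ k < n, f k ≤ f (k+1)) :
    (∑ k ∈ Finset.range n, (f (k+1) - f k)) = f n - f 0 ∧ f 0 ≤ f n := by
  induction n with
  | zero => simp
  | succ n ih =>
    obtain ⟨hs, hm⟩ := ih (fun k hk => h k (by omega))
    have := h n (by omega)
    rw [Finset.sum_range_succ, hs]
    omega

lemma measurableSet_digits (l : ℝ) (n : ℕ) (ε : ℕ → ℕ) :
    MeasurableSet {x : ℝ | ∀ k < n, Dl l ((Sl l)^[k] x) = ε k} := by
  have : {x : ℝ | ∀ k < n, Dl l ((Sl l)^[k] x) = ε k}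
      = ⋂ k ∈ {k : ℕ | k < n}, (fun x => Dl l ((Sl l)^[k] x)) ⁻¹' {ε k} := by
    ext x; simp
  rw [this]
  exact MeasurableSet.biInter (Set.to_countable _) fun k _ =>
    ((measurable_Dl l).comp ((measurable_Sl l).iterate k)) (measurableSet_singleton _)


/-- for every `λ > 1` there exists a σ-finite Borel measure `μ_λ` on `X_B` with
`μ_λ([v_0,…,v_n]) = (λ−1)^{v_n−1}/λ^n` for every finite path; in particular `μ_λ` is
tail invariant. -/
theorem exists_measure_mu_lambda (l : ℝ) (hl : 1 < l) :
    ∃ μ : Measure PathB, SigmaFinite μ ∧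
      (∀ (n : ℕ) (f : ℕ → ℕ), FinPathB f n →
        μ (CylB f n) = ENNReal.ofReal ((l - 1) ^ (f n - 1) / l ^ n)) ∧
      (∀ (n : ℕ) (f g : ℕ → ℕ), FinPathB f n → FinPathB g n → f n = g n →
        μ (CylB f n) = μ (CylB g n)) := by
  have hl1 : (0:ℝ) < l - 1 := by linarith
  set ν : ℕ → Measure PathB :=
    fun m => Measure.map (Psi l m) (volume.restrict (Ico (0:ℝ) 1)) with hν
  set μ : Measure PathB :=
    Measure.sum (fun m => ENNReal.ofReal ((l-1)^m) • ν m) with hμ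
  -- the cylinder formula
  have hcyl : ∀ (n : ℕ) (f : ℕ → ℕ), FinPathB f n →
      μ (CylB f n) = ENNReal.ofReal ((l - 1) ^ (f n - 1) / l ^ n) := by
    intro n f hf
    have hf0 : 1 ≤ f 0 := hf.1 0 (Nat.zero_le n)
    rw [hμ, Measure.sum_apply _ (measurableSet_CylB f n)]
    rw [tsum_eq_single (f 0 - 1) ?_]
    · rw [Measure.smul_apply, smul_eq_mul, hν,
        Measure.map_apply (measurable_Psi l _) (measurableSet_CylB f n),
        Psi_preimage_eq l n f hf,
        Measure.restrict_apply (measurableSet_digits l n _)]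
      have hSet : {x : ℝ | ∀ k < n, Dl l ((Sl l)^[k] x) = f (k+1) - f k} ∩ Ico (0:ℝ) 1
          = {x : ℝ | x ∈ Ico (0:ℝ) 1 ∧ ∀ k < n, Dl l ((Sl l)^[k] x) = f (k+1) - f k} := by
        ext x; simp [and_comm]
      rw [hSet, vol_digits l hl n _ ?_]
      · obtain ⟨hs, hm⟩ := tele_sum f n (fun k hk => by rcases hf.2 k hk with h | h <;> omega)
        rw [hs, ← ENNReal.ofReal_mul (by positivity)]
        congr 1
        rw [mul_div_assoc', ← pow_add]
        congr 2
        omega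
      · intro k hk
        rcases hf.2 k hk with h | h <;> omega
    · intro m hm
      rw [Measure.smul_apply, smul_eq_mul, hν,
        Measure.map_apply (measurable_Psi l _) (measurableSet_CylB f n),
        Psi_preimage_ne l m n f (by omega)]
      simp
  refine ⟨μ, ?_, hcyl, ?_⟩
  · -- sigma-finiteness
    set T : ℕ → Set PathB := fun j => {w : PathB | w.1 0 < j} with hT
    have hTmeas : ∀ j, MeasurableSet (T j) := by
      intro j
      have : T j = (fun w : PathB => w.1 0) ⁻¹' (Iio j) := rfl
      rw [this]
      exact ((measurable_pi_apply 0).comp measurable_subtype_coe) measurableSet_Iio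
    refine ⟨⟨⟨fun j => T j, fun _ => trivial, ?_, ?_⟩⟩⟩
    · intro j
      rw [hμ, Measure.sum_apply _ (hTmeas j)]
      have hterm : ∀ m, (ENNReal.ofReal ((l-1)^m) • ν m) (T j)
          = if m + 1 < j then ENNReal.ofReal ((l-1)^m) else 0 := by
        intro m
        rw [Measure.smul_apply, smul_eq_mul, hν,
          Measure.map_apply (measurable_Psi l _) (hTmeas j)]
        have hpre : Psi l m ⁻¹' T j = if m + 1 < j then univ else (∅ : Set ℝ) := by
          ext x
          by_cases h : m + 1 < j <;> simp [h, Psi, hT]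
        rw [hpre]
        by_cases h : m + 1 < j <;> simp [h, Real.volume_Ico]
      calc (∑' m, (ENNReal.ofReal ((l-1)^m) • ν m) (T j))
          = ∑ m ∈ Finset.range j, (ENNReal.ofReal ((l-1)^m) • ν m) (T j) := by
            apply tsum_eq_sum
            intro m hm
            rw [hterm m]
            simp only [Finset.mem_range, not_lt] at hm
            rw [if_neg (by omega)]
        _ < ⊤ := by
            apply ENNReal.sum_lt_top.2
            intro m _
            rw [hterm m]
            split
            · exact ENNReal.ofReal_lt_top
            · exact ENNReal.zero_lt_top
    · ext w
      simp only [mem_iUnion, mem_univ, iff_true, hT, mem_setOf_eq]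
      exact ⟨w.1 0 + 1, by omega⟩
  · -- tail invariance
    intro n f g hfp hgp hfg
    rw [hcyl n f hfp, hcyl n g hgp, hfg]
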